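/- arXiv:2510.03945 — 3 statements merged into one kernel-verified Lean document; each statement's English description precedes it below -/
import Mathlib

section
/- Let G be a finite group with supercharacter theory S such that G is not S-abelian (Z(S) ≠ G). If (G,N) is an S-GCP, then Z(S) ≤ N. -/
open scoped BigOperators Pointwise

/-- `f : G → ℂ` is an irreducible character of `G`. -/
def IsIrrChar (G : Type) [Group G] [Fintype G] (f : G → ℂ) : Prop :=
  ∃ V : FDRep ℂ G, CategoryTheory.Simple V ∧ V.character = f

/-- A supercharacter theory of a finite group `G` (Diaconis–Isaacs): a partition
`parts` of the set of irreducible characters of `G` together with a partition of `G`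
into `S`-classes (`cls g` is the class of `g`), such that `{1}` is a class, the number
of parts equals the number of classes, and each supercharacter
`σ_X = ∑ χ ∈ X, χ(1)·χ` is constant on every class. -/
structure SCT (G : Type) [Group G] [Fintype G] where
  parts : Finset (Finset (G → ℂ))
  cls : G → Set G
  parts_cover : ∀ f : G → ℂ, IsIrrChar G f ↔ ∃ X ∈ parts, f ∈ X
  parts_disj : ∀ X ∈ parts, ∀ Y ∈ parts, X ≠ Y → Disjoint X Y
  parts_nonempty : ∀ X ∈ parts, X.Nonempty
  mem_cls : ∀ g : G, g ∈ cls g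
  cls_eq : ∀ g h : G, h ∈ cls g → cls h = cls g
  cls_one : cls (1 : G) = {1}
  card_eq : parts.card = Nat.card (Set.range cls)
  const : ∀ X ∈ parts, ∀ g h : G, h ∈ cls g →
    (∑ χ ∈ X, χ 1 * χ h) = (∑ χ ∈ X, χ 1 * χ g)

variable {G : Type} [Group G] [Fintype G]

namespace SCT

/-- The supercharacter attached to a part `X`. -/
noncomputable def superchar (_S : SCT G) (X : Finset (G → ℂ)) : G → ℂ := fun g => ∑ χ ∈ X, χ 1 * χ g

/-- The set `Irr(S)` of `S`-characters. -/
def Irr (S : SCT G) : Set (G → ℂ) := {f | ∃ X ∈ S.parts, f = S.superchar X}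

end SCT

/-- The kernel of a character-like function `f : G → ℂ`. -/
def charKer (f : G → ℂ) : Subgroup G where
  carrier := {g | ∀ h, f (g * h) = f h}
  one_mem' := by intro h; simp
  mul_mem' := by intro a b ha hb h; rw [mul_assoc, ha, hb]
  inv_mem' := by
    intro a ha h
    have := ha (a⁻¹ * h)
    rw [mul_inv_cancel_left] at this
    exact this.symm

namespace SCT

/-- `[H,S]`, the subgroup generated by the `g⁻¹k` with `g ∈ H`, `k ∈ Cl_S(g)`. -/
def comm (S : SCT G) (H : Subgroup G) : Subgroup G :=
  Subgroup.closure {x | ∃ g ∈ H, ∃ k ∈ S.cls g, x = g⁻¹ * k}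

/-- `[G,S]`. -/
def derived (S : SCT G) : Subgroup G := S.comm ⊤

/-- `Irr(S | N)`: the `S`-characters whose kernel does not contain `N`. -/
def IrrRel (S : SCT G) (N : Subgroup G) : Set (G → ℂ) :=
  {f | f ∈ S.Irr ∧ ¬ N ≤ charKer f}

/-- `g` is an `S`-Camina element: all of `Irr(S | [G,S])` vanishes at `g`. -/
def IsCaminaElt (S : SCT G) (g : G) : Prop :=
  ∀ f ∈ S.IrrRel S.derived, f g = 0

/-- `N` is `S`-normal: a union of `S`-classes. -/
def IsNormal (S : SCT G) (N : Subgroup G) : Prop :=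
  ∀ g ∈ N, S.cls g ⊆ N

/-- `(G,N)` is a generalised `S`-Camina pair. -/
def IsGCP (S : SCT G) (N : Subgroup G) : Prop :=
  S.IsNormal N ∧ ∀ g : G, g ∉ N → S.IsCaminaElt g

/-- The set `Z(S)` of elements with singleton `S`-class. -/
def centerSet (S : SCT G) : Set G := {g | S.cls g = {g}}

/-- The vanishing-off subgroup `V(S | N)`. -/
def V (S : SCT G) (N : Subgroup G) : Subgroup G :=
  Subgroup.closure {g | ∃ f ∈ S.IrrRel N, f g ≠ 0}

/-- `V(S) = V(S | [G,S])`. -/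
def VS (S : SCT G) : Subgroup G := S.V S.derived

/-- `U(S | N)`: the product of all `S`-normal subgroups `H` with `V(S | H) ≤ N`. -/
def U (S : SCT G) (N : Subgroup G) : Subgroup G :=
  ⨆ (H : Subgroup G) (_ : S.IsNormal H ∧ S.V H ≤ N), H

/-- The upper `S`-central series: `ζ_0 = 1` and `ζ_{i+1}/ζ_i = Z(S^{G/ζ_i})`,
i.e. `ζ_{i+1}` consists of the `g` whose `S`-class maps onto the single coset `gζ_i`. -/
def zeta (S : SCT G) : ℕ → Subgroup G
  | 0 => ⊥
  | i + 1 => Subgroup.closure {g | ∀ k ∈ S.cls g, g⁻¹ * k ∈ S.zeta i}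

/-- The lower `S`-central series `γ_1 = G`, `γ_{i+1} = [γ_i, S]` (with `γ_0 := G`). -/
def gamma (S : SCT G) : ℕ → Subgroup G
  | 0 => ⊤
  | 1 => ⊤
  | n + 2 => S.comm (S.gamma (n + 1))

/-- The series `V_1(S) = V(S)`, `V_{i+1}(S) = [V_i(S), S]` (with `V_0 := V(S)`). -/
def Vseq (S : SCT G) : ℕ → Subgroup G
  | 0 => S.VS
  | 1 => S.VS
  | n + 2 => S.comm (S.Vseq (n + 1))

/-- `G` is a `VZ(S)`-group: every member of `Irr(S | [G,S])` vanishes off `Z(S)`. -/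
def IsVZ (S : SCT G) : Prop :=
  ∀ f ∈ S.IrrRel S.derived, ∀ g : G, g ∉ S.centerSet → f g = 0

end SCT


/-- Compatibility shim: the complex absolute value as a bundled absolute value. -/
noncomputable def Complex.abs : AbsoluteValue ℂ ℝ := IsAbsoluteValue.toAbsoluteValue (norm : ℂ → ℝ)

@[simp] lemma Complex.abs_apply (z : ℂ) : Complex.abs z = ‖z‖ := rfl

lemma Complex.abs_ofReal (r : ℝ) : Complex.abs (r : ℂ) = |r| := by simp

lemma Complex.abs.sum_le {ι : Type*} (s : Finset ι) (f : ι → ℂ) :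
    Complex.abs (∑ i ∈ s, f i) ≤ ∑ i ∈ s, Complex.abs (f i) := by
  simpa using norm_sum_le s f

section Aux
open Polynomial CategoryTheory

section MatrixAux

lemma root_abs_one' {n : Type} [Fintype n] [DecidableEq n] (M : Matrix n n ℂ) (k : ℕ) (hk : k ≠ 0)
    (hM : M ^ k = 1) (μ : ℂ) (hμ : μ ∈ M.charpoly.roots) : Complex.abs μ = 1 := by
  have hroot : M.charpoly.IsRoot μ := (Polynomial.mem_roots (M.charpoly_monic.ne_zero)).1 hμ
  have hdet : (μ • (1 : Matrix n n ℂ) - M).det = 0 := by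
    have hmap : (Matrix.charmatrix M).map (Polynomial.evalRingHom μ) = μ • (1 : Matrix n n ℂ) - M := by
      ext i j
      by_cases h : i = j <;>
        simp [Matrix.charmatrix_apply, h, Matrix.one_apply, Matrix.diagonal_apply]
    have h2 := (RingHom.map_det (Polynomial.evalRingHom μ) (Matrix.charmatrix M)).symm
    rw [show (evalRingHom μ).mapMatrix M.charmatrix = M.charmatrix.map ⇑(evalRingHom μ) from rfl,
      hmap] at h2
    rw [h2]
    simpa [Matrix.charpoly] using hroot
  obtain ⟨v, hv0, hv⟩ := (Matrix.exists_mulVec_eq_zero_iff).2 hdet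
  have hMv : M.mulVec v = μ • v := by
    rw [Matrix.sub_mulVec] at hv
    have h1 : (μ • (1 : Matrix n n ℂ)).mulVec v = μ • v := by
      rw [Matrix.smul_mulVec, Matrix.one_mulVec]
    rw [h1, sub_eq_zero] at hv
    exact hv.symm
  have hpow : ∀ j : ℕ, (M ^ j).mulVec v = μ ^ j • v := by
    intro j
    induction j with
    | zero => simp [Matrix.one_mulVec]
    | succ j ih =>
        rw [pow_succ', pow_succ', ← Matrix.mulVec_mulVec, ih, Matrix.mulVec_smul, hMv,
          smul_smul, mul_comm μ (μ ^ j)]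
  have hμk : μ ^ k = 1 := by
    have h3 := hpow k
    rw [hM, Matrix.one_mulVec] at h3
    obtain ⟨i, hi⟩ := Function.ne_iff.1 hv0
    have h4 := congrFun h3 i
    simp only [Pi.smul_apply, smul_eq_mul, Pi.zero_apply] at h4 hi
    exact mul_right_cancel₀ hi (by linear_combination -h4)
  have habs : (Complex.abs μ) ^ k = 1 := by
    rw [← map_pow, hμk, map_one]
  have h0 : (0:ℝ) ≤ Complex.abs μ := Complex.abs.nonneg μ
  rcases lt_trichotomy (Complex.abs μ) 1 with hlt | heq | hgt
  · exact absurd habs (by have := pow_lt_one₀ h0 hlt hk; linarith)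
  · exact heq
  · exact absurd habs (by have := one_lt_pow₀ hgt hk; linarith)

lemma trace_abs_le' {n : Type} [Fintype n] [DecidableEq n] (M : Matrix n n ℂ) (k : ℕ) (hk : k ≠ 0)
    (hM : M ^ k = 1) : Complex.abs M.trace ≤ Fintype.card n := by
  rw [Matrix.trace_eq_sum_roots_charpoly]
  calc Complex.abs M.charpoly.roots.sum ≤ (M.charpoly.roots.map Complex.abs).sum := by
        apply Multiset.le_sum_of_subadditive Complex.abs (map_zero _).le (fun a b => Complex.abs.add_le a b)
    _ = (M.charpoly.roots.map (fun _ => (1:ℝ))).sum := by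
        congr 1
        apply Multiset.map_congr rfl
        intro μ hμ
        exact root_abs_one' M k hk hM μ hμ
    _ ≤ Fintype.card n := by
        rw [Multiset.map_const', Multiset.sum_replicate, nsmul_eq_mul, mul_one]
        have hcard : M.charpoly.roots.card = M.charpoly.natDegree := by
          exact IsAlgClosed.card_roots_eq_natDegree
        rw [hcard, M.charpoly_natDegree_eq_dim]

end MatrixAux

section CharAux

variable {G : Type} [Group G] [Fintype G]

lemma char_abs_le' (V : FDRep ℂ G) (g : G) :
    Complex.abs (V.character g) ≤ (Module.finrank ℂ V : ℝ) := by
  classical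
  let b := Module.finBasis ℂ V
  have htr : V.character g = (LinearMap.toMatrix b b (V.ρ g)).trace := by
    rw [FDRep.character, LinearMap.trace_eq_matrix_trace ℂ b]
  have hpow : (LinearMap.toMatrix b b (V.ρ g)) ^ Fintype.card G = 1 := by
    have : V.ρ g ^ Fintype.card G = 1 := by
      rw [← map_pow, pow_card_eq_one, map_one]
    rw [LinearMap.toMatrix_pow, this, LinearMap.toMatrix_one]
  have hb := trace_abs_le' (LinearMap.toMatrix b b (V.ρ g)) (Fintype.card G)
    Fintype.card_ne_zero hpow
  rw [htr]
  simpa using hb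

end CharAux

section SCTAux

open scoped Classical

variable {G : Type} [Group G] [Fintype G]

/-- Basic facts about an irreducible character. -/
lemma irr_facts {f : G → ℂ} (hf : IsIrrChar G f) :
    f 1 = ((Complex.abs (f 1) : ℝ) : ℂ) ∧ 1 ≤ Complex.abs (f 1) ∧
      ∀ g, Complex.abs (f g) ≤ Complex.abs (f 1) := by
  obtain ⟨V, hV, hVc⟩ := hf
  haveI := hV
  subst hVc
  have h1 : V.character 1 = (Module.finrank ℂ V : ℂ) := by
    simpa using FDRep.char_one V
  have hpos : 0 < Module.finrank ℂ V := by
    rcases Nat.eq_zero_or_pos (Module.finrank ℂ V) with h | h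
    · exfalso
      haveI hss : Subsingleton ↑V.V := Module.finrank_zero_iff.1 h
      haveI : Subsingleton ↑V.V.obj := hss
      apply CategoryTheory.id_nonzero V
      apply Action.Hom.ext
      ext x
      exact Subsingleton.elim _ _
    · exact h
  have habs1 : Complex.abs (V.character 1) = (Module.finrank ℂ V : ℝ) := by
    rw [h1]
    simp
  refine ⟨by rw [habs1, h1]; norm_num, ?_, ?_⟩
  · rw [habs1]
    exact_mod_cast hpos
  · intro g
    rw [habs1]
    exact char_abs_le' V g

/-- Orthogonality of irreducible characters. -/
lemma irr_pairing {f h : G → ℂ} (hf : IsIrrChar G f) (hh : IsIrrChar G h) :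
    ∑ g : G, f g * h g⁻¹ = if f = h then (Fintype.card G : ℂ) else 0 := by
  obtain ⟨V, hV, hVc⟩ := hf
  obtain ⟨W, hW, hWc⟩ := hh
  haveI := hV; haveI := hW
  subst hVc; subst hWc
  have hcard0 : (Fintype.card G : ℂ) ≠ 0 := by
    exact_mod_cast Fintype.card_ne_zero
  letI : Invertible ((Nat.card G) : ℂ) :=
    invertibleOfNonzero (by rwa [Nat.card_eq_fintype_card])
  have key : ((Nat.card G : ℂ))⁻¹ * ∑ g : G, V.character g * W.character g⁻¹ =
      if Nonempty (V ≅ W) then (1 : ℂ) else 0 :=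
    FDRep.char_orthonormal (k := ℂ) V W
  have key2 : ∑ g : G, V.character g * W.character g⁻¹ =
      (Fintype.card G : ℂ) * (if Nonempty (V ≅ W) then (1 : ℂ) else 0) := by
    have h3 := congrArg (fun x => (Fintype.card G : ℂ) * x) key
    simpa [Nat.card_eq_fintype_card, hcard0] using h3
  by_cases hiso : Nonempty (V ≅ W)
  · have hEq : V.character = W.character := FDRep.char_iso hiso.some
    rw [key2, if_pos hiso, if_pos hEq, mul_one]
  · have hNe : V.character ≠ W.character := by
      intro hEq
      have keyV : ((Nat.card G : ℂ))⁻¹ * ∑ g : G, V.character g * V.character g⁻¹ =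
          if Nonempty (V ≅ V) then (1 : ℂ) else 0 :=
        FDRep.char_orthonormal (k := ℂ) V V
      rw [if_pos ⟨Iso.refl V⟩] at keyV
      rw [← hEq, keyV] at key
      rw [if_neg hiso] at key
      exact one_ne_zero key
    rw [key2, if_neg hiso, if_neg hNe, mul_zero]

variable (S : SCT G)

lemma mem_parts_irr {X : Finset (G → ℂ)} (hX : X ∈ S.parts) {f : G → ℂ} (hf : f ∈ X) :
    IsIrrChar G f :=
  (S.parts_cover f).2 ⟨X, hX, hf⟩

/-- Orthogonality of supercharacters. -/
lemma superchar_pairing {X Y : Finset (G → ℂ)} (hX : X ∈ S.parts) (hY : Y ∈ S.parts) :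
    ∑ g : G, S.superchar X g * S.superchar Y g⁻¹ =
      if X = Y then (Fintype.card G : ℂ) * S.superchar X 1 else 0 := by
  have hswap : ∑ g : G, S.superchar X g * S.superchar Y g⁻¹ =
      ∑ χ ∈ X, ∑ ψ ∈ Y, (χ 1 * ψ 1) * ∑ g : G, χ g * ψ g⁻¹ := by
    unfold SCT.superchar
    have h1 : ∀ g : G, (∑ χ ∈ X, χ 1 * χ g) * (∑ ψ ∈ Y, ψ 1 * ψ g⁻¹) =
        ∑ χ ∈ X, ∑ ψ ∈ Y, (χ 1 * ψ 1) * (χ g * ψ g⁻¹) := by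
      intro g
      rw [Finset.sum_mul_sum]
      exact Finset.sum_congr rfl fun χ _ => Finset.sum_congr rfl fun ψ _ => by ring
    rw [Finset.sum_congr rfl fun g _ => h1 g, Finset.sum_comm]
    refine Finset.sum_congr rfl fun χ _ => ?_
    rw [Finset.sum_comm]
    refine Finset.sum_congr rfl fun ψ _ => ?_
    rw [← Finset.mul_sum]
  rw [hswap]
  by_cases hXY : X = Y
  · subst hXY
    rw [if_pos rfl]
    have hterm : ∀ χ ∈ X, ∑ ψ ∈ X, (χ 1 * ψ 1) * ∑ g : G, χ g * ψ g⁻¹ =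
        (Fintype.card G : ℂ) * (χ 1 * χ 1) := by
      intro χ hχ
      rw [Finset.sum_eq_single χ]
      · rw [irr_pairing (mem_parts_irr S hX hχ) (mem_parts_irr S hX hχ), if_pos rfl]
        ring
      · intro ψ hψ hne
        rw [irr_pairing (mem_parts_irr S hX hχ) (mem_parts_irr S hX hψ),
          if_neg (fun hc => hne hc.symm), mul_zero]
      · intro hc
        exact absurd hχ hc
    rw [Finset.sum_congr rfl hterm, ← Finset.mul_sum]
    unfold SCT.superchar
    rfl
  · rw [if_neg hXY]
    refine Finset.sum_eq_zero fun χ hχ => Finset.sum_eq_zero fun ψ hψ => ?_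
    have hne : χ ≠ ψ := by
      intro hc
      subst hc
      exact Finset.disjoint_left.1 (S.parts_disj X hX Y hY hXY) hχ hψ
    rw [irr_pairing (mem_parts_irr S hX hχ) (mem_parts_irr S hY hψ), if_neg hne, mul_zero]

/-- The degree of a supercharacter is a positive real, and bounds all values. -/
lemma superchar_bounds {X : Finset (G → ℂ)} (hX : X ∈ S.parts) :
    ∃ t : ℝ, 0 < t ∧ S.superchar X 1 = (t : ℂ) ∧
      ∀ g, Complex.abs (S.superchar X g) ≤ t := by
  refine ⟨∑ χ ∈ X, (Complex.abs (χ 1))^2, ?_, ?_, ?_⟩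
  · obtain ⟨χ, hχ⟩ := S.parts_nonempty X hX
    refine Finset.sum_pos' (fun ψ _ => sq_nonneg _) ⟨χ, hχ, ?_⟩
    have := (irr_facts (mem_parts_irr S hX hχ)).2.1
    nlinarith
  · unfold SCT.superchar
    rw [Complex.ofReal_sum]
    refine Finset.sum_congr rfl fun χ hχ => ?_
    have h1 := (irr_facts (mem_parts_irr S hX hχ)).1
    rw [h1, ← Complex.ofReal_mul, ← sq, Complex.abs_ofReal,
      abs_of_nonneg (Complex.abs.nonneg (χ 1))]
  · intro g
    unfold SCT.superchar
    calc Complex.abs (∑ χ ∈ X, χ 1 * χ g) ≤ ∑ χ ∈ X, Complex.abs (χ 1 * χ g) :=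
          Complex.abs.sum_le _ _
      _ ≤ ∑ χ ∈ X, (Complex.abs (χ 1))^2 := by
          refine Finset.sum_le_sum fun χ hχ => ?_
          rw [map_mul, sq]
          have h2 := (irr_facts (mem_parts_irr S hX hχ)).2.2 g
          have h3 := Complex.abs.nonneg (χ 1)
          have h4 := Complex.abs.nonneg (χ g)
          nlinarith
  
lemma superchar_one_ne_zero {X : Finset (G → ℂ)} (hX : X ∈ S.parts) :
    S.superchar X 1 ≠ 0 := by
  obtain ⟨t, ht, heq, -⟩ := superchar_bounds S hX
  rw [heq]
  exact_mod_cast ht.ne'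

/-- The submodule of `S`-class functions. -/
noncomputable def classFun : Submodule ℂ (G → ℂ) where
  carrier := {f | ∀ g h, h ∈ S.cls g → f h = f g}
  add_mem' := by intro a b ha hb g h hh; simp only [Pi.add_apply, ha g h hh, hb g h hh]
  zero_mem' := by intro g h hh; simp
  smul_mem' := by intro c a ha g h hh; simp only [Pi.smul_apply, ha g h hh]

lemma finrank_classFun : Module.finrank ℂ (classFun S) = S.parts.card := by
  haveI : Fintype ↥(Set.range S.cls) := (Set.finite_range S.cls).fintype
  let e : classFun S ≃ₗ[ℂ] (↥(Set.range S.cls) → ℂ) :=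
    { toFun := fun f C => f.1 C.2.choose
      map_add' := by intro a b; rfl
      map_smul' := by intro c a; rfl
      invFun := fun u => ⟨fun g => u ⟨S.cls g, ⟨g, rfl⟩⟩, by
        intro g h hh
        exact congrArg u (Subtype.ext (S.cls_eq g h hh))⟩
      left_inv := by
        intro f
        apply Subtype.ext
        funext g
        have hsp : S.cls (⟨S.cls g, ⟨g, rfl⟩⟩ : ↥(Set.range S.cls)).2.choose = S.cls g :=
          (⟨S.cls g, ⟨g, rfl⟩⟩ : ↥(Set.range S.cls)).2.choose_spec
        have hg : g ∈ S.cls (⟨S.cls g, ⟨g, rfl⟩⟩ : ↥(Set.range S.cls)).2.choose := by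
          rw [hsp]; exact S.mem_cls g
        exact (f.2 _ g hg).symm
      right_inv := by
        intro u
        funext C
        exact congrArg u (Subtype.ext C.2.choose_spec) }
  rw [LinearEquiv.finrank_eq e, Module.finrank_pi, ← Nat.card_eq_fintype_card, ← S.card_eq]

/-- The supercharacters as elements of `classFun`. -/
noncomputable def scharFun : {X // X ∈ S.parts} → classFun S := fun X =>
  ⟨S.superchar X.1, fun g h hh => S.const X.1 X.2 g h hh⟩

lemma coe_sum_schar (c : {X // X ∈ S.parts} → ℂ) :
    ((∑ i : {X // X ∈ S.parts}, c i • scharFun S i : classFun S) : G → ℂ)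
      = ∑ i : {X // X ∈ S.parts}, c i • S.superchar i.1 :=
  calc ((∑ i : {X // X ∈ S.parts}, c i • scharFun S i : classFun S) : G → ℂ)
      = ∑ i : {X // X ∈ S.parts}, ((c i • scharFun S i : classFun S) : G → ℂ) :=
        map_sum ((classFun S).subtype) _ _
    _ = ∑ i : {X // X ∈ S.parts}, c i • S.superchar i.1 := rfl

lemma pairing_sum_left {ι : Type} (s : Finset ι) (c : ι → ℂ) (F : ι → G → ℂ) (h : G → ℂ) :
    ∑ g : G, (∑ i ∈ s, c i • F i) g * h g⁻¹ = ∑ i ∈ s, c i * ∑ g : G, F i g * h g⁻¹ := by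
  have h1 : ∀ g : G, (∑ i ∈ s, c i • F i) g * h g⁻¹ = ∑ i ∈ s, c i * (F i g * h g⁻¹) := by
    intro g
    rw [Finset.sum_apply, Finset.sum_mul]
    exact Finset.sum_congr rfl fun i _ => by simp [mul_assoc]
  rw [Finset.sum_congr rfl fun g _ => h1 g, Finset.sum_comm]
  exact Finset.sum_congr rfl fun i _ => by rw [← Finset.mul_sum]

lemma scharFun_linearIndependent : LinearIndependent ℂ (scharFun S) := by
  rw [Fintype.linearIndependent_iff]
  intro c hc i
  have hfun : (∑ j : {X // X ∈ S.parts}, c j • S.superchar j.1) = (0 : G → ℂ) := by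
    rw [← coe_sum_schar S c, hc]
    rfl
  have hpair := pairing_sum_left (Finset.univ : Finset {X // X ∈ S.parts}) c
    (fun j => S.superchar j.1) (S.superchar i.1)
  rw [hfun] at hpair
  simp only [Pi.zero_apply, zero_mul, Finset.sum_const_zero] at hpair
  rw [Finset.sum_eq_single i] at hpair
  · rw [superchar_pairing S i.2 i.2, if_pos rfl] at hpair
    have hcard : (Fintype.card G : ℂ) ≠ 0 := by exact_mod_cast Fintype.card_ne_zero
    have h1 := superchar_one_ne_zero S i.2
    rcases mul_eq_zero.1 hpair.symm with h | h
    · exact h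
    · exact absurd h (by simp [hcard, h1, mul_eq_zero])
  · intro j _ hji
    rw [superchar_pairing S j.2 i.2, if_neg (fun hc' => hji (Subtype.ext hc')), mul_zero]
  · intro hc'
    exact absurd (Finset.mem_univ i) hc'

lemma parts_nonempty' : Nonempty {X // X ∈ S.parts} := by
  have hpos : 0 < S.parts.card := by
    rw [S.card_eq]
    haveI : Fintype ↥(Set.range S.cls) := (Set.finite_range S.cls).fintype
    rw [Nat.card_eq_fintype_card]
    haveI : Nonempty ↥(Set.range S.cls) := ⟨⟨S.cls 1, ⟨1, rfl⟩⟩⟩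
    exact Fintype.card_pos
  obtain ⟨X, hX⟩ := Finset.card_pos.1 hpos
  exact ⟨⟨X, hX⟩⟩

/-- The key expansion: the rescaled indicator of a singleton class expands in
supercharacters. -/
lemma expansion {z : G} (hz : S.cls z = {z}) (w : G) :
    (Fintype.card G : ℂ) * (if w = z then 1 else 0) =
      ∑ i : {X // X ∈ S.parts},
        (S.superchar i.1 z⁻¹ / S.superchar i.1 1) * S.superchar i.1 w := by
  haveI := parts_nonempty' S
  have hcardeq : Fintype.card {X // X ∈ S.parts} = Module.finrank ℂ (classFun S) := by
    rw [Fintype.card_coe, finrank_classFun]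
  let B := basisOfLinearIndependentOfCardEqFinrank (scharFun_linearIndependent S) hcardeq
  have hB : ∀ i, B i = scharFun S i := by
    intro i
    simp only [B, coe_basisOfLinearIndependentOfCardEqFinrank]
  have hδmem : (fun g => if g = z then (1:ℂ) else 0) ∈ classFun S := by
    intro g h hh
    by_cases hgz : g = z
    · subst hgz
      rw [hz, Set.mem_singleton_iff] at hh
      simp [hh]
    · have hhz : h ≠ z := by
        intro hc
        have h2 : S.cls h = S.cls g := S.cls_eq g h hh
        rw [hc, hz] at h2
        have h3 := S.mem_cls g
        rw [← h2, Set.mem_singleton_iff] at h3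
        exact hgz h3
      simp [hgz, hhz]
  set δ : classFun S := ⟨fun g => if g = z then (1:ℂ) else 0, hδmem⟩ with hδdef
  set c : {X // X ∈ S.parts} → ℂ := fun i => B.repr δ i with hcdef
  have hrepr : ∑ i : {X // X ∈ S.parts}, c i • scharFun S i = δ := by
    rw [show (fun i => c i • scharFun S i) = fun i => c i • B i from funext fun i => by
      rw [hB]]
    exact B.sum_repr δ
  have hfun : (fun g => if g = z then (1:ℂ) else 0)
      = ∑ i : {X // X ∈ S.parts}, c i • S.superchar i.1 := by
    rw [← coe_sum_schar S c, hrepr]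
  have hpair : ∀ i₀ : {X // X ∈ S.parts},
      c i₀ * ((Fintype.card G : ℂ) * S.superchar i₀.1 1) = S.superchar i₀.1 z⁻¹ := by
    intro i₀
    have h1 : ∑ g : G, (fun g => if g = z then (1:ℂ) else 0) g * S.superchar i₀.1 g⁻¹
        = S.superchar i₀.1 z⁻¹ := by
      rw [Finset.sum_eq_single z]
      · simp
      · intro g _ hg
        simp [hg]
      · intro hc'
        exact absurd (Finset.mem_univ z) hc'
    rw [hfun, pairing_sum_left] at h1
    rw [Finset.sum_eq_single i₀] at h1
    · rw [superchar_pairing S i₀.2 i₀.2, if_pos rfl] at h1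
      exact h1
    · intro j _ hj
      rw [superchar_pairing S j.2 i₀.2, if_neg (fun hc' => hj (Subtype.ext hc')), mul_zero]
    · intro hc'
      exact absurd (Finset.mem_univ i₀) hc'
  have hw : (if w = z then (1:ℂ) else 0) = ∑ i : {X // X ∈ S.parts}, c i * S.superchar i.1 w := by
    have h2 := congrFun hfun w
    rw [Finset.sum_apply] at h2
    exact h2
  rw [hw, Finset.mul_sum]
  refine Finset.sum_congr rfl fun i _ => ?_
  have h1 := superchar_one_ne_zero S i.2
  rw [div_mul_eq_mul_div, eq_div_iff h1]
  linear_combination S.superchar i.1 w * hpair i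

/-- Supercharacters do not vanish on singleton classes. -/
lemma superchar_ne_zero_of_singleton {z : G} (hz : S.cls z = {z})
    {X : Finset (G → ℂ)} (hX : X ∈ S.parts) : S.superchar X z ≠ 0 := by
  haveI := parts_nonempty' S
  -- the two expansion identities
  have h1 := expansion S hz z
  rw [if_pos rfl, mul_one] at h1
  have h2 := expansion S S.cls_one 1
  rw [if_pos rfl, mul_one] at h2
  -- ∑ superchar i 1 = card G
  have hsum1 : ∑ i : {X // X ∈ S.parts}, S.superchar i.1 1 = (Fintype.card G : ℂ) := by
    rw [h2]
    refine (Finset.sum_congr rfl fun i _ => ?_).symm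
    have hne := superchar_one_ne_zero S i.2
    rw [inv_one]
    field_simp
  -- choose the real data
  choose t ht hteq htb using fun i : {X // X ∈ S.parts} => superchar_bounds S i.2
  -- ∑ t i = card G (real)
  have hsumt : ∑ i : {X // X ∈ S.parts}, t i = (Fintype.card G : ℝ) := by
    have : ((∑ i : {X // X ∈ S.parts}, t i : ℝ) : ℂ) = ((Fintype.card G : ℝ) : ℂ) := by
      push_cast
      rw [← hsum1]
      exact Finset.sum_congr rfl fun i _ => (hteq i).symm
    exact_mod_cast this
  -- each |u i| ≤ t i
  set u : {X // X ∈ S.parts} → ℂ :=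
    fun i => (S.superchar i.1 z⁻¹ / S.superchar i.1 1) * S.superchar i.1 z with hudef
  have hu : ∀ i, Complex.abs (u i) ≤ t i := by
    intro i
    have hne := superchar_one_ne_zero S i.2
    rw [hudef]
    simp only [map_mul, map_div₀]
    rw [hteq i]
    have habs1 : Complex.abs ((t i : ℂ)) = t i := by
      rw [Complex.abs_ofReal, abs_of_pos (ht i)]
    rw [habs1]
    have hb1 := htb i z⁻¹
    have hb2 := htb i z
    have htpos := ht i
    have h0a := Complex.abs.nonneg (S.superchar i.1 z⁻¹)
    have h0b := Complex.abs.nonneg (S.superchar i.1 z)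
    rw [div_mul_eq_mul_div, div_le_iff₀ htpos]
    nlinarith
  -- sum of |u i| is at least card G
  have habs_sum : (Fintype.card G : ℝ) ≤ ∑ i : {X // X ∈ S.parts}, Complex.abs (u i) := by
    have : Complex.abs ((Fintype.card G : ℂ)) ≤ ∑ i : {X // X ∈ S.parts}, Complex.abs (u i) := by
      rw [h1]
      exact Complex.abs.sum_le _ _
    simpa using this
  -- equality throughout, each |u i| = t i
  have hzero : ∑ i : {X // X ∈ S.parts}, (t i - Complex.abs (u i)) = 0 := by
    have hle : ∑ i : {X // X ∈ S.parts}, Complex.abs (u i) ≤ ∑ i, t i :=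
      Finset.sum_le_sum fun i _ => hu i
    rw [Finset.sum_sub_distrib, hsumt]
    linarith
  have heach : ∀ i : {X // X ∈ S.parts}, t i - Complex.abs (u i) = 0 := by
    have := (Finset.sum_eq_zero_iff_of_nonneg
      (fun i _ => by linarith [hu i])).1 hzero
    exact fun i => this i (Finset.mem_univ i)
  -- conclude
  intro hzero'
  have hi := heach ⟨X, hX⟩
  rw [hudef] at hi
  simp only [hzero', mul_zero, map_zero] at hi
  exact absurd hi (by have := ht ⟨X, hX⟩; simp only [sub_zero]; exact this.ne')

end SCTAux
end Aux

/-- if `G` is not `S`-abelian and `(G,N)` is an `S`-GCP, then `Z(S) ≤ N`. -/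
theorem centerSet_subset_of_isGCP (S : SCT G) (N : Subgroup G)
    (hab : S.centerSet ≠ Set.univ) (h : S.IsGCP N) : S.centerSet ⊆ (N : Set G) := by
  classical
  intro z hz
  rw [SCT.centerSet, Set.mem_setOf_eq] at hz
  by_contra hzN
  -- z is an S-Camina element
  have hcam := h.2 z hzN
  -- every supercharacter is nonzero at z, so every part's kernel contains [G,S]
  have hker : ∀ X ∈ S.parts, S.derived ≤ charKer (S.superchar X) := by
    intro X hX
    by_contra hle
    exact superchar_ne_zero_of_singleton S hz hX
      (hcam (S.superchar X) ⟨⟨X, hX, rfl⟩, hle⟩)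
  -- find a nontrivial element of [G,S]
  obtain ⟨w, hw⟩ := Set.ne_univ_iff_exists_notMem _ |>.1 hab
  rw [SCT.centerSet, Set.mem_setOf_eq] at hw
  have hk : ∃ k ∈ S.cls w, k ≠ w := by
    by_contra hc
    push_neg at hc
    exact hw (Set.eq_singleton_iff_unique_mem.2 ⟨S.mem_cls w, hc⟩)
  obtain ⟨k, hkmem, hkne⟩ := hk
  set d := w⁻¹ * k with hd
  have hd1 : d ≠ 1 := by
    intro hc
    rw [hd, inv_mul_eq_one] at hc
    exact hkne hc.symm
  have hdmem : d ∈ S.derived :=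
    Subgroup.subset_closure ⟨w, Subgroup.mem_top w, k, hkmem, rfl⟩
  -- kernels give σ d = σ 1 for all parts
  have hd_eq : ∀ i : {X // X ∈ S.parts}, S.superchar i.1 d = S.superchar i.1 1 := by
    intro i
    have := (hker i.1 i.2 hdmem) 1
    rw [mul_one] at this
    exact this
  -- expansion at d and at 1
  have h2 := expansion S S.cls_one 1
  rw [if_pos rfl, mul_one] at h2
  have h3 := expansion S S.cls_one d
  rw [if_neg hd1, mul_zero] at h3
  rw [show (fun i : {X // X ∈ S.parts} =>
    (S.superchar i.1 (1:G)⁻¹ / S.superchar i.1 1) * S.superchar i.1 d) = fun i =>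
    (S.superchar i.1 (1:G)⁻¹ / S.superchar i.1 1) * S.superchar i.1 1 from
      funext fun i => by rw [hd_eq i]] at h3
  rw [← h3] at h2
  have hcard : (Fintype.card G : ℂ) ≠ 0 := by exact_mod_cast Fintype.card_ne_zero
  exact hcard h2
end

section
/- Let S be a supercharacter theory of a finite group G, and suppose [G,S] is not contained in ζ_m(S) for some m ≥ 1. Then ζ_{m+1}(S) ≤ V(S). -/
open scoped BigOperators Pointwise

variable {G : Type} [Group G] [Fintype G]

section Helpers


theorem e_lemma (χ ψ : G → ℂ) (hχ : IsIrrChar G χ) (hψ : IsIrrChar G ψ) :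
    ∑ g : G, χ g * ψ g⁻¹ = if χ = ψ then (Fintype.card G : ℂ) else 0 := by
  classical
  obtain ⟨V, hV, rfl⟩ := hχ
  obtain ⟨W, hW, rfl⟩ := hψ
  letI : Fintype ↑(G) := (inferInstance : Fintype G)
  letI : Invertible ((Fintype.card ↑(G) : ℂ)) :=
    invertibleOfNonzero (Nat.cast_ne_zero.mpr Fintype.card_ne_zero)
  have hcast : ((Fintype.card ↑(G) : ℕ) : ℂ) = ((Fintype.card G : ℕ) : ℂ) := rfl
  have hcne : ((Fintype.card G : ℂ)) ≠ 0 := Nat.cast_ne_zero.mpr Fintype.card_ne_zero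
  have conv : ∀ (V W : FDRep ℂ (G)), CategoryTheory.Simple V → CategoryTheory.Simple W →
      (∑ g : G, V.character g * W.character g⁻¹) =
        if Nonempty (V ≅ W) then (Fintype.card G : ℂ) else 0 := by
    intro V W hV hW
    haveI := hV; haveI := hW
    have h3 := FDRep.char_orthonormal V W
    rw [Nat.card_eq_fintype_card, inv_mul_eq_iff_eq_mul₀ hcne] at h3
    rw [h3]
    split <;> simp
  by_cases hiso : Nonempty (V ≅ W)
  · have hc : V.character = W.character := FDRep.char_iso hiso.some
    rw [if_pos hc]
    rw [conv V W hV hW, if_pos hiso]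
  · have hne : V.character ≠ W.character := by
      intro heq
      have h1 := conv V V hV hV
      rw [if_pos ⟨CategoryTheory.Iso.refl V⟩] at h1
      have h2 := conv V W hV hW
      rw [if_neg hiso] at h2
      rw [← heq] at h2
      rw [h2] at h1
      exact hcne h1.symm
    rw [if_neg hne, conv V W hV hW, if_neg hiso]

theorem irrchar_mul_comm {f : G → ℂ} (hf : IsIrrChar G f) (a b : G) : f (a * b) = f (b * a) := by
  obtain ⟨V, -, rfl⟩ := hf
  exact FDRep.char_mul_comm V b a

theorem irrchar_one_nat {f : G → ℂ} (hf : IsIrrChar G f) : ∃ n : ℕ, 0 < n ∧ f 1 = n := by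
  obtain ⟨V, hV, rfl⟩ := hf
  refine ⟨Module.finrank ℂ V, ?_, FDRep.char_one V⟩
  by_contra hn
  have h0 : Module.finrank ℂ V = 0 := Nat.eq_zero_of_not_pos hn
  have hsub : Subsingleton V := Module.finrank_zero_iff.mp h0
  have hchar : ∀ g : G, V.character g = 0 := by
    intro g
    have : V.ρ g = 0 := Subsingleton.elim _ _
    simp [FDRep.character, this]
  have h1 := e_lemma V.character V.character ⟨V, hV, rfl⟩ ⟨V, hV, rfl⟩
  rw [if_pos rfl] at h1
  simp only [hchar, zero_mul, Finset.sum_const_zero] at h1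
  exact (Nat.cast_ne_zero.mpr Fintype.card_ne_zero : (Fintype.card G : ℂ) ≠ 0) h1.symm

namespace SCT
variable (S : SCT G)

lemma isIrrChar_of_mem {X : Finset (G → ℂ)} (hX : X ∈ S.parts) {χ : G → ℂ} (hχ : χ ∈ X) :
    IsIrrChar G χ := (S.parts_cover χ).mpr ⟨X, hX, hχ⟩

lemma superchar_one_ne_zero {X : Finset (G → ℂ)} (hX : X ∈ S.parts) :
    S.superchar X 1 ≠ 0 := by
  classical
  have hn : ∀ χ ∈ X, ∃ n : ℕ, 0 < n ∧ χ 1 = n := fun χ hχ =>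
    irrchar_one_nat (S.isIrrChar_of_mem hX hχ)
  choose! n hpos hval using hn
  have : S.superchar X 1 = ((∑ χ ∈ X, n χ * n χ : ℕ) : ℂ) := by
    rw [SCT.superchar]
    push_cast
    exact Finset.sum_congr rfl fun χ hχ => by rw [hval χ hχ]
  rw [this]
  rw [Nat.cast_ne_zero]
  obtain ⟨χ₀, hχ₀⟩ := S.parts_nonempty X hX
  have : 0 < n χ₀ * n χ₀ := Nat.mul_pos (hpos χ₀ hχ₀) (hpos χ₀ hχ₀)
  exact Nat.ne_of_gt (Finset.sum_pos' (fun _ _ => Nat.zero_le _) ⟨χ₀, hχ₀, this⟩)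

lemma row_orth {X Y : Finset (G → ℂ)} (hX : X ∈ S.parts) (hY : Y ∈ S.parts) :
    ∑ g : G, S.superchar X g * S.superchar Y g⁻¹ =
      if X = Y then (Fintype.card G : ℂ) * S.superchar X 1 else 0 := by
  classical
  have expand : ∀ g : G, S.superchar X g * S.superchar Y g⁻¹ =
      ∑ χ ∈ X, ∑ ψ ∈ Y, (χ 1 * ψ 1) * (χ g * ψ g⁻¹) := by
    intro g
    rw [SCT.superchar, SCT.superchar, Finset.sum_mul_sum]
    exact Finset.sum_congr rfl fun χ _ => Finset.sum_congr rfl fun ψ _ => by ring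
  calc ∑ g : G, S.superchar X g * S.superchar Y g⁻¹
      = ∑ g : G, ∑ χ ∈ X, ∑ ψ ∈ Y, (χ 1 * ψ 1) * (χ g * ψ g⁻¹) :=
        Finset.sum_congr rfl fun g _ => expand g
    _ = ∑ χ ∈ X, ∑ ψ ∈ Y, ∑ g : G, (χ 1 * ψ 1) * (χ g * ψ g⁻¹) := by
        rw [Finset.sum_comm]
        exact Finset.sum_congr rfl fun χ _ => Finset.sum_comm
    _ = ∑ χ ∈ X, ∑ ψ ∈ Y, (χ 1 * ψ 1) * ∑ g : G, χ g * ψ g⁻¹ := by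
        refine Finset.sum_congr rfl fun χ _ => Finset.sum_congr rfl fun ψ _ => ?_
        rw [Finset.mul_sum]
    _ = ∑ χ ∈ X, ∑ ψ ∈ Y, if χ = ψ then (χ 1 * ψ 1) * (Fintype.card G : ℂ) else 0 := by
        refine Finset.sum_congr rfl fun χ hχ => Finset.sum_congr rfl fun ψ hψ => ?_
        rw [e_lemma χ ψ (S.isIrrChar_of_mem hX hχ) (S.isIrrChar_of_mem hY hψ)]
        rw [mul_ite, mul_zero]
    _ = if X = Y then (Fintype.card G : ℂ) * S.superchar X 1 else 0 := by
        by_cases hXY : X = Y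
        · subst hXY
          rw [if_pos rfl]
          have : ∀ χ ∈ X, (∑ ψ ∈ X, if χ = ψ then (χ 1 * ψ 1) * (Fintype.card G : ℂ) else 0)
              = (χ 1 * χ 1) * (Fintype.card G : ℂ) := by
            intro χ hχ
            rw [Finset.sum_ite_eq X χ (fun ψ => (χ 1 * ψ 1) * (Fintype.card G : ℂ)), if_pos hχ]
          rw [Finset.sum_congr rfl this, SCT.superchar, Finset.mul_sum]
          exact Finset.sum_congr rfl fun χ _ => by ring
        · rw [if_neg hXY]
          refine Finset.sum_eq_zero fun χ hχ => Finset.sum_eq_zero fun ψ hψ => ?_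
          rw [if_neg]
          intro hc
          subst hc
          exact (Finset.disjoint_left.mp (S.parts_disj X hX Y hY hXY) hχ) hψ

lemma key (N : Subgroup G) (hNV : N ≤ S.VS) (hD : ¬ S.derived ≤ N) :
    Subgroup.closure {g : G | ∀ k ∈ S.cls g, g⁻¹ * k ∈ N} ≤ S.VS := by
  classical
  rw [Subgroup.closure_le]
  intro g hg
  simp only [Set.mem_setOf_eq] at hg
  rw [SetLike.mem_coe]
  by_contra hgV
  apply hD
  rw [SCT.derived, SCT.comm, Subgroup.closure_le]
  rintro x ⟨a, -, k, hk, rfl⟩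
  rw [SetLike.mem_coe]
  set d : G := a⁻¹ * k with hd_def
  have hd : d ∈ S.derived := Subgroup.subset_closure ⟨a, trivial, k, hk, rfl⟩
  -- vanishing of "relative" supercharacters outside VS
  have hvanish : ∀ x : G, x ∉ S.VS → ∀ Y ∈ S.parts,
      ¬ S.derived ≤ charKer (S.superchar Y) → S.superchar Y x = 0 := by
    intro x hx Y hY hker
    by_contra hne
    exact hx (Subgroup.subset_closure ⟨S.superchar Y, ⟨⟨Y, hY, rfl⟩, hker⟩, hne⟩)
  -- index types
  letI : Fintype ↥(Set.range S.cls) := (Set.finite_range S.cls).fintype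
  have hcard : Fintype.card {X // X ∈ S.parts} = Fintype.card ↥(Set.range S.cls) := by
    rw [Fintype.card_coe, ← Nat.card_eq_fintype_card]
    exact S.card_eq
  let e : {X // X ∈ S.parts} ≃ ↥(Set.range S.cls) := Fintype.equivOfCardEq hcard
  let c : G → {X // X ∈ S.parts} := fun x => e.symm ⟨S.cls x, ⟨x, rfl⟩⟩
  let K : {X // X ∈ S.parts} → Set G := fun j => (e j : Set G)
  have hKc : ∀ x : G, K (c x) = S.cls x := by
    intro x
    show ((e (e.symm ⟨S.cls x, ⟨x, rfl⟩⟩)) : Set G) = S.cls x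
    rw [Equiv.apply_symm_apply]
  have hr : ∀ j, ∃ y : G, S.cls y = K j := fun j => (e j).2
  choose r hrK using hr
  have hmem : ∀ (x : G) (j), x ∈ K j → c x = j := by
    intro x j hx
    rw [← hrK j] at hx
    have hcx : S.cls x = K j := by rw [S.cls_eq (r j) x hx, hrK j]
    have : (⟨S.cls x, ⟨x, rfl⟩⟩ : ↥(Set.range S.cls)) = e j := Subtype.ext hcx
    show e.symm _ = j
    rw [this, Equiv.symm_apply_apply]
  have hmem' : ∀ (x : G) (j), c x = j → x ∈ K j := by
    intro x j hj
    rw [← hj, hKc]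
    exact S.mem_cls x
  have hconst : ∀ (X : {X // X ∈ S.parts}) (x : G) (j), c x = j →
      S.superchar ↑X x = S.superchar ↑X (r j) := by
    intro X x j hj
    have hx : x ∈ S.cls (r j) := by rw [hrK j]; exact hmem' x j hj
    exact S.const ↑X X.2 (r j) x hx
  -- matrices
  let D : {X // X ∈ S.parts} → ℂ := fun Y => (Fintype.card G : ℂ) * S.superchar ↑Y 1
  have hD0 : ∀ Y, D Y ≠ 0 := fun Y =>
    mul_ne_zero (Nat.cast_ne_zero.mpr Fintype.card_ne_zero) (S.superchar_one_ne_zero Y.2)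
  let P : Matrix {X // X ∈ S.parts} {X // X ∈ S.parts} ℂ := fun X j => S.superchar ↑X (r j)
  let Q : Matrix {X // X ∈ S.parts} {X // X ∈ S.parts} ℂ := fun j Y =>
    (∑ x ∈ Finset.univ.filter (fun x => c x = j), S.superchar ↑Y x⁻¹) / D Y
  have hPQ : P * Q = 1 := by
    ext X Y
    rw [Matrix.mul_apply, Matrix.one_apply]
    have hterm : ∀ j, P X j * Q j Y =
        (∑ x ∈ Finset.univ.filter (fun x => c x = j),
          S.superchar ↑X x * S.superchar ↑Y x⁻¹) / D Y := by
      intro j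
      show S.superchar ↑X (r j) * (_ / D Y) = _
      rw [mul_div_assoc', Finset.mul_sum]
      congr 1
      refine Finset.sum_congr rfl fun x hx => ?_
      rw [← hconst X x j (Finset.mem_filter.mp hx).2]
    rw [Finset.sum_congr rfl fun j _ => hterm j, ← Finset.sum_div,
      Finset.sum_fiberwise Finset.univ (fun x => c x) (fun x => S.superchar ↑X x * S.superchar ↑Y x⁻¹),
      S.row_orth X.2 Y.2]
    by_cases hXY : (X : Finset (G → ℂ)) = (Y : Finset (G → ℂ))
    · have hXY' : X = Y := Subtype.ext hXY
      rw [if_pos hXY, if_pos hXY', hXY']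
      exact div_self (hD0 Y)
    · rw [if_neg hXY, if_neg (fun hc => hXY (by rw [hc])), zero_div]
  have hQP : Q * P = 1 := mul_eq_one_comm.mp hPQ
  -- the two entries
  let j0 := c g
  let l0 := c (g * d)
  have hent : ∀ j l, (∑ Y, Q j Y * P Y l) = if j = l then (1:ℂ) else 0 := by
    intro j l
    have := (Matrix.ext_iff.mpr hQP) j l
    rw [Matrix.mul_apply, Matrix.one_apply] at this
    exact this
  have hclaim : ∀ Y : {X // X ∈ S.parts}, Q j0 Y * P Y j0 = Q j0 Y * P Y l0 := by
    intro Y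
    by_cases hker : S.derived ≤ charKer (S.superchar ↑Y)
    · -- P Y j0 = σ g, P Y l0 = σ (g*d) = σ (d*g) = σ g
      have h1 : P Y j0 = S.superchar ↑Y g := (hconst Y g j0 rfl).symm
      have h2 : P Y l0 = S.superchar ↑Y (g * d) := (hconst Y (g * d) l0 rfl).symm
      have h3 : S.superchar ↑Y (g * d) = S.superchar ↑Y (d * g) := by
        rw [SCT.superchar, SCT.superchar]
        refine Finset.sum_congr rfl fun χ hχ => ?_
        rw [irrchar_mul_comm (S.isIrrChar_of_mem Y.2 hχ) g d]
      have h4 : S.superchar ↑Y (d * g) = S.superchar ↑Y g := (hker hd) g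
      rw [h1, h2, h3, h4]
    · -- Q j0 Y = 0
      have hQ0 : Q j0 Y = 0 := by
        show (_ / D Y) = 0
        rw [div_eq_zero_iff]
        left
        refine Finset.sum_eq_zero fun x hx => ?_
        have hxcls : x ∈ S.cls g := by
          have := hmem' x j0 (Finset.mem_filter.mp hx).2
          rwa [hKc g] at this
        have hn : g⁻¹ * x ∈ N := hg x hxcls
        by_contra hne
        have hxinv : x⁻¹ ∈ S.VS := Subgroup.subset_closure
          ⟨S.superchar ↑Y, ⟨⟨↑Y, Y.2, rfl⟩, hker⟩, hne⟩
        have : g⁻¹ ∈ S.VS := by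
          have hginv : g⁻¹ = (g⁻¹ * x) * x⁻¹ := by group
          rw [hginv]
          exact mul_mem (hNV hn) hxinv
        exact hgV (by simpa using inv_mem this)
      rw [hQ0, zero_mul, zero_mul]
  have h1 : (1:ℂ) = if j0 = l0 then (1:ℂ) else 0 := by
    have e1 := hent j0 j0
    rw [if_pos rfl] at e1
    have e3 : (∑ Y, Q j0 Y * P Y j0) = ∑ Y, Q j0 Y * P Y l0 :=
      Finset.sum_congr rfl fun Y _ => hclaim Y
    exact e1.symm.trans (e3.trans (hent j0 l0))
  have hj0l0 : j0 = l0 := by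
    by_contra hne
    rw [if_neg hne] at h1
    exact one_ne_zero h1
  -- conclude
  have hclseq : S.cls (g * d) = S.cls g := by
    have : K j0 = K l0 := by rw [hj0l0]
    rw [hKc, hKc] at this
    exact this.symm
  have : g * d ∈ S.cls g := by rw [← hclseq]; exact S.mem_cls (g * d)
  have := hg (g * d) this
  rwa [inv_mul_cancel_left] at this

lemma zeta_succ_eq (S : SCT G) (i : ℕ) :
    S.zeta (i + 1) = Subgroup.closure {g : G | ∀ k ∈ S.cls g, g⁻¹ * k ∈ S.zeta i} := rfl

lemma zeta_le_succ (S : SCT G) : ∀ i, S.zeta i ≤ S.zeta (i + 1)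
  | 0 => bot_le
  | (i + 1) => by
      rw [S.zeta_succ_eq, S.zeta_succ_eq]
      exact Subgroup.closure_mono (fun g hg k hk => S.zeta_le_succ i (hg k hk))

lemma zeta_le_of_le (S : SCT G) {i j : ℕ} (h : i ≤ j) : S.zeta i ≤ S.zeta j := by
  induction h with
  | refl => exact le_refl _
  | step _ ih => exact ih.trans (S.zeta_le_succ _)

end SCT
end Helpers

/-- if `[G,S] ≰ ζ_m(S)` for some `m ≥ 1`, then `ζ_{m+1}(S) ≤ V(S)`. -/
theorem zeta_succ_le_VS (S : SCT G) (m : ℕ) (hm : 1 ≤ m)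
    (h : ¬ S.derived ≤ S.zeta m) : S.zeta (m + 1) ≤ S.VS := by
  have main : ∀ i, i ≤ m + 1 → S.zeta i ≤ S.VS := by
    intro i
    induction i with
    | zero => intro _; exact bot_le
    | succ i ih =>
      intro hi
      have hiN : S.zeta i ≤ S.VS := ih (Nat.le_of_succ_le hi)
      have him : i ≤ m := Nat.succ_le_succ_iff.mp hi
      have hDi : ¬ S.derived ≤ S.zeta i := fun hle => h (hle.trans (S.zeta_le_of_le him))
      rw [S.zeta_succ_eq]
      exact S.key _ hiN hDi
  exact main (m + 1) le_rfl
end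

section
/- Let G be a finite group that is S-nilpotent of S-nilpotence class c for a supercharacter theory S. Then ζ_{c-1}(S) ≤ V(S). -/
open scoped BigOperators Pointwise

variable {G : Type} [Group G] [Fintype G]

open CategoryTheory in
lemma SCT.irr_orthog {f f' : G → ℂ} (hf : IsIrrChar G f) (hf' : IsIrrChar G f') :
    ∑ x : G, f x * f' x⁻¹ = if f = f' then (Fintype.card G : ℂ) else 0 := by
  classical
  have hcard : (Fintype.card G : ℂ) ≠ 0 := by
    exact_mod_cast Nat.cast_ne_zero.mpr Fintype.card_ne_zero
  letI : Invertible (Fintype.card G : ℂ) := invertibleOfNonzero hcard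
  have hcard' : (Nat.card G : ℂ) ≠ 0 := by rw [Nat.card_eq_fintype_card]; exact hcard
  obtain ⟨V, hV, rfl⟩ := hf
  by_cases h : V.character = f'
  · subst h
    rw [if_pos rfl]
    have h1 := FDRep.char_orthonormal (k := ℂ) (G := G) V V
    rw [if_pos ⟨Iso.refl V⟩, inv_mul_eq_iff_eq_mul₀ hcard'] at h1
    simpa [Nat.card_eq_fintype_card] using h1
  · obtain ⟨W, hW, rfl⟩ := hf'
    rw [if_neg h]
    have h1 := FDRep.char_orthonormal (k := ℂ) (G := G) V W
    rw [if_neg (fun ⟨i⟩ => h (FDRep.char_iso i)), inv_mul_eq_iff_eq_mul₀ hcard'] at h1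
    simpa [Nat.card_eq_fintype_card] using h1

open CategoryTheory in
lemma SCT.irr_one {f : G → ℂ} (hf : IsIrrChar G f) : ∃ d : ℕ, 0 < d ∧ f 1 = d := by
  obtain ⟨V, hV, rfl⟩ := hf
  refine ⟨Module.finrank ℂ V, ?_, by simpa using FDRep.char_one V⟩
  by_contra h
  have h0 : Module.finrank ℂ V = 0 := by omega
  have hss : Subsingleton V := Module.finrank_zero_iff.1 h0
  refine CategoryTheory.Simple.not_isZero V ?_
  rw [CategoryTheory.Limits.IsZero.iff_id_eq_zero]
  apply Action.hom_ext
  haveI : Subsingleton ((CategoryTheory.forget (FGModuleCat ℂ)).obj V.V) := hss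
  ext v
  exact Subsingleton.elim _ _

namespace SCT

variable (S : SCT G)

lemma card_ne_zero' : (Fintype.card G : ℂ) ≠ 0 := by
  exact_mod_cast Nat.cast_ne_zero.mpr Fintype.card_ne_zero

lemma mem_parts_isIrr {X : Finset (G → ℂ)} {χ : G → ℂ} (hX : X ∈ S.parts) (hχ : χ ∈ X) :
    IsIrrChar G χ := (S.parts_cover χ).2 ⟨X, hX, hχ⟩

lemma mem_cls_symm {g k : G} (h : k ∈ S.cls g) : g ∈ S.cls k := by
  rw [S.cls_eq g k h]; exact S.mem_cls g

/-- The space of `S`-class functions. -/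
noncomputable def CF : Submodule ℂ (G → ℂ) where
  carrier := {f | ∀ g k, k ∈ S.cls g → f k = f g}
  add_mem' := fun hf hg g k hk => by
    simp only [Pi.add_apply]; rw [hf g k hk, hg g k hk]
  zero_mem' := fun g k _ => rfl
  smul_mem' := fun c f hf g k hk => by
    simp only [Pi.smul_apply]; rw [hf g k hk]

lemma mem_CF {f : G → ℂ} : f ∈ S.CF ↔ ∀ g k, k ∈ S.cls g → f k = f g := Iff.rfl

open Classical in
/-- Indicator function of the class of `g`. -/
noncomputable def ind (g : G) : G → ℂ := fun x => if x ∈ S.cls g then 1 else 0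

lemma ind_mem_CF (g : G) : S.ind g ∈ S.CF := by
  classical
  intro a k hk
  have hiff : (k ∈ S.cls g) ↔ (a ∈ S.cls g) := by
    constructor
    · intro h
      have e1 := S.cls_eq g k h
      have e2 := S.cls_eq a k hk
      rw [← e1, e2]; exact S.mem_cls a
    · intro h
      have e1 := S.cls_eq g a h
      rw [← e1]; exact hk
  simp only [ind]
  exact if_congr hiff rfl rfl

lemma superchar_mem_CF {X : Finset (G → ℂ)} (hX : X ∈ S.parts) : S.superchar X ∈ S.CF :=
  fun g k hk => S.const X hX g k hk

open Finset in
lemma superchar_pair {X Y : Finset (G → ℂ)} (hX : X ∈ S.parts) (hY : Y ∈ S.parts) :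
    ∑ x : G, S.superchar X x * S.superchar Y x⁻¹ =
      if X = Y then (Fintype.card G : ℂ) * S.superchar X 1 else 0 := by
  classical
  have step1 : ∑ x : G, S.superchar X x * S.superchar Y x⁻¹
      = ∑ χ ∈ X, ∑ χ' ∈ Y, (χ 1 * χ' 1) * ∑ x : G, χ x * χ' x⁻¹ := by
    simp only [superchar, sum_mul_sum]
    rw [Finset.sum_comm]
    refine Finset.sum_congr rfl fun χ _ => ?_
    rw [Finset.sum_comm]
    refine Finset.sum_congr rfl fun χ' _ => ?_
    rw [Finset.mul_sum]
    refine Finset.sum_congr rfl fun x _ => by ring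
  rw [step1]
  have step2 : ∀ χ ∈ X, ∀ χ' ∈ Y, (χ 1 * χ' 1) * (∑ x : G, χ x * χ' x⁻¹)
      = if χ = χ' then (χ 1 * χ' 1) * (Fintype.card G : ℂ) else 0 := by
    intro χ hχ χ' hχ'
    rw [SCT.irr_orthog (S.mem_parts_isIrr hX hχ) (S.mem_parts_isIrr hY hχ')]
    split <;> simp
  rw [Finset.sum_congr rfl fun χ hχ => Finset.sum_congr rfl fun χ' hχ' => step2 χ hχ χ' hχ']
  by_cases hXY : X = Y
  · subst hXY
    rw [if_pos rfl]
    have : ∀ χ ∈ X, ∑ χ' ∈ X, (if χ = χ' then (χ 1 * χ' 1) * (Fintype.card G : ℂ) else 0)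
        = (χ 1 * χ 1) * (Fintype.card G : ℂ) := by
      intro χ hχ
      rw [Finset.sum_ite_eq X χ (fun χ' => (χ 1 * χ' 1) * (Fintype.card G : ℂ))]
      exact if_pos hχ
    rw [Finset.sum_congr rfl this, superchar, Finset.mul_sum]
    exact Finset.sum_congr rfl fun χ _ => by ring
  · rw [if_neg hXY]
    refine Finset.sum_eq_zero fun χ hχ => Finset.sum_eq_zero fun χ' hχ' => ?_
    have : χ ≠ χ' := fun h => by
      exact (Finset.disjoint_left.1 (S.parts_disj X hX Y hY hXY)) hχ (h ▸ hχ')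
    rw [if_neg this]

open Finset in
lemma superchar_one_pos {X : Finset (G → ℂ)} (hX : X ∈ S.parts) :
    ∃ n : ℕ, 0 < n ∧ S.superchar X 1 = n := by
  classical
  have h : ∀ χ : {χ // χ ∈ X}, ∃ d : ℕ, 0 < d ∧ χ.1 1 = d :=
    fun χ => SCT.irr_one (S.mem_parts_isIrr hX χ.2)
  choose d hd hval using h
  refine ⟨∑ χ ∈ X.attach, d χ * d χ, ?_, ?_⟩
  · obtain ⟨χ0, h0⟩ := Finset.attach_nonempty_iff.2 (S.parts_nonempty X hX)
    exact Finset.sum_pos' (fun _ _ => Nat.zero_le _) ⟨χ0, h0, Nat.mul_pos (hd χ0) (hd χ0)⟩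
  · rw [superchar, ← Finset.sum_attach X (fun χ => χ 1 * χ 1)]
    push_cast
    exact Finset.sum_congr rfl fun χ _ => by rw [hval χ]

open Finset in
lemma pairing_eval {f : G → ℂ} {a : {X // X ∈ S.parts} → ℂ}
    (hf : f = ∑ i : {X // X ∈ S.parts}, a i • S.superchar i.1) (Y : {X // X ∈ S.parts}) :
    ∑ x : G, f x * S.superchar Y.1 x⁻¹
      = a Y * ((Fintype.card G : ℂ) * S.superchar Y.1 1) := by
  classical
  subst hf
  have step1 : ∑ x : G, (∑ i : {X // X ∈ S.parts}, a i • S.superchar i.1) x * S.superchar Y.1 x⁻¹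
      = ∑ i : {X // X ∈ S.parts}, a i * ∑ x : G, S.superchar i.1 x * S.superchar Y.1 x⁻¹ :=
    calc ∑ x : G, (∑ i : {X // X ∈ S.parts}, a i • S.superchar i.1) x * S.superchar Y.1 x⁻¹
        = ∑ x : G, ∑ i : {X // X ∈ S.parts}, a i * (S.superchar i.1 x * S.superchar Y.1 x⁻¹) := by
          refine Finset.sum_congr rfl fun x _ => ?_
          simp only [Finset.sum_apply, Pi.smul_apply, smul_eq_mul, Finset.sum_mul, mul_assoc]
      _ = ∑ i : {X // X ∈ S.parts}, ∑ x : G, a i * (S.superchar i.1 x * S.superchar Y.1 x⁻¹) :=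
          Finset.sum_comm
      _ = ∑ i : {X // X ∈ S.parts}, a i * ∑ x : G, S.superchar i.1 x * S.superchar Y.1 x⁻¹ :=
          Finset.sum_congr rfl fun i _ => (Finset.mul_sum _ _ _).symm
  rw [step1]
  have step2 : ∀ i : {X // X ∈ S.parts},
      a i * ∑ x : G, S.superchar i.1 x * S.superchar Y.1 x⁻¹
        = if i = Y then a i * ((Fintype.card G : ℂ) * S.superchar i.1 1) else 0 := by
    intro i
    rw [S.superchar_pair i.2 Y.2]
    by_cases h : i = Y
    · subst h; rw [if_pos rfl, if_pos rfl]
    · rw [if_neg (fun hh => h (Subtype.ext hh)), if_neg h, mul_zero]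
  rw [Finset.sum_congr rfl fun i _ => step2 i, Finset.sum_ite_eq' Finset.univ Y
    (fun i => a i * ((Fintype.card G : ℂ) * S.superchar i.1 1)), if_pos (Finset.mem_univ Y)]

lemma linIndep : LinearIndependent ℂ
    (fun i : {X // X ∈ S.parts} => (⟨S.superchar i.1, S.superchar_mem_CF i.2⟩ : S.CF)) := by
  classical
  rw [Fintype.linearIndependent_iff]
  intro a h Y
  have h' : (0 : G → ℂ) = ∑ i : {X // X ∈ S.parts}, a i • S.superchar i.1 := by
    have := congrArg (Subtype.val) h
    simpa [← Submodule.coe_sum] using this.symm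
  have hp := S.pairing_eval h' Y
  simp only [Pi.zero_apply, zero_mul, Finset.sum_const_zero] at hp
  have hcn : (Fintype.card G : ℂ) * S.superchar Y.1 1 ≠ 0 :=
    mul_ne_zero (SCT.card_ne_zero' (G := G)) (S.superchar_one_ne_zero Y.2)
  exact (mul_eq_zero.1 hp.symm).resolve_right hcn

lemma finrank_CF : Module.finrank ℂ S.CF = S.parts.card := by
  classical
  letI : Fintype ↥(Set.range S.cls) := (Set.finite_range S.cls).fintype
  let e : S.CF ≃ₗ[ℂ] (↥(Set.range S.cls) → ℂ) :=
    { toFun := fun f K => f.1 K.2.choose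
      map_add' := fun f g => rfl
      map_smul' := fun c f => rfl
      invFun := fun F => ⟨fun g => F ⟨S.cls g, ⟨g, rfl⟩⟩, fun g k hk =>
        congrArg F (Subtype.ext (S.cls_eq g k hk))⟩
      left_inv := fun f => Subtype.ext (funext fun g => by
        have hs : S.cls ((⟨S.cls g, ⟨g, rfl⟩⟩ : ↥(Set.range S.cls)).2.choose) = S.cls g :=
          Exists.choose_spec (⟨g, rfl⟩ : ∃ y, S.cls y = S.cls g)
        have hmem := S.mem_cls ((⟨S.cls g, ⟨g, rfl⟩⟩ : ↥(Set.range S.cls)).2.choose)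
        rw [hs] at hmem
        exact f.2 g _ hmem)
      right_inv := fun F => funext fun K => by
        show F _ = F K
        congr 1
        exact Subtype.ext (Exists.choose_spec K.2) }
  rw [e.finrank_eq, Module.finrank_fintype_fun_eq_card, ← Nat.card_eq_fintype_card, ← S.card_eq]

lemma exists_expansion {f : G → ℂ} (hf : f ∈ S.CF) :
    ∃ a : {X // X ∈ S.parts} → ℂ, f = ∑ i : {X // X ∈ S.parts}, a i • S.superchar i.1 := by
  classical
  have hspan := (S.linIndep).span_eq_top_of_card_eq_finrank'
    (by rw [Fintype.card_coe, S.finrank_CF])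
  have hmem : (⟨f, hf⟩ : S.CF) ∈ Submodule.span ℂ
      (Set.range (fun i : {X // X ∈ S.parts} =>
        (⟨S.superchar i.1, S.superchar_mem_CF i.2⟩ : S.CF))) := by
    rw [hspan]; trivial
  rw [Submodule.mem_span_range_iff_exists_fun] at hmem
  obtain ⟨a, ha⟩ := hmem
  refine ⟨a, ?_⟩
  have := congrArg Subtype.val ha
  simpa [← Submodule.coe_sum] using this.symm

lemma agree {u v : G} (h : ∀ X ∈ S.parts, S.superchar X u = S.superchar X v)
    {f : G → ℂ} (hf : f ∈ S.CF) : f u = f v := by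
  obtain ⟨a, ha⟩ := S.exists_expansion hf
  rw [ha]
  simp only [Finset.sum_apply, Pi.smul_apply, smul_eq_mul]
  exact Finset.sum_congr rfl fun i _ => by rw [h i.1 i.2]

lemma superchar_conj {X : Finset (G → ℂ)} (hX : X ∈ S.parts) (x h : G) :
    S.superchar X (h * x * h⁻¹) = S.superchar X x := by
  refine Finset.sum_congr rfl fun χ hχ => ?_
  obtain ⟨V, _, rfl⟩ := S.mem_parts_isIrr hX hχ
  rw [FDRep.char_conj]

lemma cls_conj {g x : G} (hx : x ∈ S.cls g) (h : G) : h * x * h⁻¹ ∈ S.cls g := by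
  classical
  have key := S.agree (fun X hX => S.superchar_conj hX x h) (S.ind_mem_CF g)
  simp only [ind] at key
  rw [if_pos hx] at key
  by_contra hc
  rw [if_neg hc] at key
  exact zero_ne_one key

lemma derived_normal : S.derived.Normal := by
  constructor
  intro n hn g
  have h1 : S.derived.map (MulAut.conj g).toMonoidHom ≤ S.derived := by
    show Subgroup.map _ (Subgroup.closure _) ≤ _
    rw [MonoidHom.map_closure]
    apply Subgroup.closure_mono
    rintro y ⟨x, ⟨a, -, k, hk, rfl⟩, rfl⟩
    refine ⟨g * a * g⁻¹, Subgroup.mem_top _, g * k * g⁻¹, ?_, ?_⟩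
    · have h2 : g * a * g⁻¹ ∈ S.cls a := S.cls_conj (S.mem_cls a) g
      rw [S.cls_eq a _ h2]
      exact S.cls_conj hk g
    · show MulAut.conj g (a⁻¹ * k) = _
      simp [MulAut.conj_apply]
      group
  have h9 := h1 ⟨n, hn, rfl⟩
  simpa [MulAut.conj_apply] using h9

lemma mem_charKer_iff {f : G → ℂ} {x : G} : x ∈ charKer f ↔ ∀ h, f (x * h) = f h := Iff.rfl

lemma vanish_of_not_mem_VS {g : G} (hg : g ∉ S.VS) {X : Finset (G → ℂ)} (hX : X ∈ S.parts)
    (hker : ¬ S.derived ≤ charKer (S.superchar X)) : S.superchar X g = 0 := by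
  by_contra h0
  exact hg (Subgroup.subset_closure ⟨S.superchar X, ⟨⟨X, hX, rfl⟩, hker⟩, h0⟩)

lemma mem_derived_of_cls {x k : G} (hk : k ∈ S.cls x) : x⁻¹ * k ∈ S.derived :=
  Subgroup.subset_closure ⟨x, Subgroup.mem_top x, k, hk, rfl⟩

open Finset in
lemma sum_superchar_eq_zero {x : G} (hx : x ≠ 1) :
    ∑ i : {X // X ∈ S.parts}, S.superchar i.1 x = 0 := by
  classical
  obtain ⟨a, ha⟩ := S.exists_expansion (S.ind_mem_CF 1)
  have hcoef : ∀ Y : {X // X ∈ S.parts}, a Y * (Fintype.card G : ℂ) = 1 := by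
    intro Y
    have hp := S.pairing_eval ha Y
    have hL : ∑ v : G, S.ind 1 v * S.superchar Y.1 v⁻¹ = S.superchar Y.1 1 := by
      simp only [ind, S.cls_one]
      rw [Finset.sum_eq_single (1 : G)]
      · simp
      · intro v _ hv
        rw [if_neg (by simpa using hv), zero_mul]
      · simp
    rw [hL] at hp
    have hn := S.superchar_one_ne_zero Y.2
    have h2 : (a Y * (Fintype.card G : ℂ)) * S.superchar Y.1 1 = 1 * S.superchar Y.1 1 := by
      linear_combination -hp
    exact mul_right_cancel₀ hn h2
  have hx0 : S.ind 1 x = 0 := by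
    simp only [ind, S.cls_one]
    rw [if_neg (by simpa using hx)]
  have hzero := congrFun ha x
  rw [hx0] at hzero
  simp only [Finset.sum_apply, Pi.smul_apply, smul_eq_mul] at hzero
  have h6 : ∑ i : {X // X ∈ S.parts}, S.superchar i.1 x
      = (Fintype.card G : ℂ) * ∑ i : {X // X ∈ S.parts}, a i * S.superchar i.1 x := by
    rw [Finset.mul_sum]
    refine Finset.sum_congr rfl fun i _ => ?_
    calc S.superchar i.1 x
        = (a i * (Fintype.card G : ℂ)) * S.superchar i.1 x := by rw [hcoef i, one_mul]
      _ = (Fintype.card G : ℂ) * (a i * S.superchar i.1 x) := by ring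
  rw [h6, ← hzero, mul_zero]

open Finset in
lemma derived_le_VS : S.derived ≤ S.VS := by
  classical
  intro x hx
  by_cases hx1 : x = 1
  · subst hx1; exact one_mem _
  by_contra hxV
  obtain ⟨a, ha⟩ := S.exists_expansion (S.ind_mem_CF x)
  set m : ℂ := ((Finset.univ.filter (fun v => v ∈ S.cls x)).card : ℂ) with hm
  have hterm : ∀ i : {X // X ∈ S.parts},
      (Fintype.card G : ℂ) * (a i * S.superchar i.1 x) = m * S.superchar i.1 x := by
    intro i
    by_cases hker : S.derived ≤ charKer (S.superchar i.1)
    · have hp := S.pairing_eval ha i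
      have hL : ∑ v : G, S.ind x v * S.superchar i.1 v⁻¹ = m * S.superchar i.1 1 := by
        have hv1 : ∀ v : G, S.ind x v * S.superchar i.1 v⁻¹
            = if v ∈ S.cls x then S.superchar i.1 1 else 0 := by
          intro v
          simp only [ind]
          by_cases hv : v ∈ S.cls x
          · rw [if_pos hv, if_pos hv, one_mul]
            have hvD : v ∈ S.derived := by
              have h6 := mul_mem hx (S.mem_derived_of_cls hv)
              simpa using h6
            have h7 := (SCT.mem_charKer_iff.1 (hker (inv_mem hvD))) 1
            simpa using h7
          · rw [if_neg hv, if_neg hv, zero_mul]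
        rw [Finset.sum_congr rfl fun v _ => hv1 v, Finset.sum_ite, Finset.sum_const,
          Finset.sum_const_zero, add_zero, nsmul_eq_mul]
      rw [hL] at hp
      have hx' : S.superchar i.1 x = S.superchar i.1 1 := by
        have h8 := (SCT.mem_charKer_iff.1 (hker hx)) 1
        simpa using h8
      rw [hx']
      linear_combination -hp
    · rw [S.vanish_of_not_mem_VS hxV i.2 hker, mul_zero, mul_zero, mul_zero]
  have h1 : S.ind x x = 1 := by simp only [ind]; rw [if_pos (S.mem_cls x)]
  have h2 := congrFun ha x
  rw [h1] at h2
  simp only [Finset.sum_apply, Pi.smul_apply, smul_eq_mul] at h2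
  have h3 : (Fintype.card G : ℂ) = ∑ i : {X // X ∈ S.parts},
      (Fintype.card G : ℂ) * (a i * S.superchar i.1 x) := by
    rw [← Finset.mul_sum, ← h2, mul_one]
  rw [Finset.sum_congr rfl fun i _ => hterm i, ← Finset.mul_sum,
    S.sum_superchar_eq_zero hx1, mul_zero] at h3
  exact SCT.card_ne_zero' (G := G) h3

lemma camina {g : G} (hg : g ∉ S.VS) {d : G} (hd : d ∈ S.derived) : g * d ∈ S.cls g := by
  classical
  have hgd : g * d ∉ S.VS := fun h => hg (by
    have : (g * d) * d⁻¹ ∈ S.VS := mul_mem h (inv_mem (S.derived_le_VS hd))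
    simpa using this)
  have hagree : ∀ X ∈ S.parts, S.superchar X (g * d) = S.superchar X g := by
    intro X hX
    by_cases hker : S.derived ≤ charKer (S.superchar X)
    · have hdg : g * d * g⁻¹ ∈ S.derived := S.derived_normal.conj_mem d hd g
      have happ := (SCT.mem_charKer_iff.1 (hker hdg)) g
      rw [show g * d = (g * d * g⁻¹) * g by group]
      exact happ
    · rw [S.vanish_of_not_mem_VS hgd hX hker, S.vanish_of_not_mem_VS hg hX hker]
  have key := S.agree hagree (S.ind_mem_CF g)
  simp only [ind] at key
  rw [if_pos (S.mem_cls g)] at key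
  by_contra hc
  rw [if_neg hc] at key
  exact zero_ne_one key

end SCT

/-- if `G` is `S`-nilpotent of `S`-nilpotence class `c`
(`c` is the least index with `ζ_c(S) = G`), then `ζ_{c-1}(S) ≤ V(S)`. -/
theorem zeta_pred_le_VS (S : SCT G) (c : ℕ) (hc : S.zeta c = ⊤)
    (hmin : ∀ n, S.zeta n = ⊤ → c ≤ n) : S.zeta (c - 1) ≤ S.VS := by
  rcases c with _ | _ | n
  · have h0 : S.zeta 0 = ⊥ := rfl
    show S.zeta 0 ≤ S.VS
    rw [h0]; exact bot_le
  · have h0 : S.zeta 0 = ⊥ := rfl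
    show S.zeta 0 ≤ S.VS
    rw [h0]; exact bot_le
  · show S.zeta (n + 1) ≤ S.VS
    have hzsucc : S.zeta (n + 1)
        = Subgroup.closure {g : G | ∀ k ∈ S.cls g, g⁻¹ * k ∈ S.zeta n} := rfl
    rw [hzsucc]
    refine (Subgroup.closure_le _).2 ?_
    intro g hgA
    by_contra hgV
    have hD : S.derived ≤ S.zeta n := by
      intro d hd
      have h2 := hgA _ (S.camina hgV hd)
      simpa using h2
    have htop : S.zeta (n + 1) = ⊤ := by
      rw [eq_top_iff]
      intro h _
      rw [hzsucc]
      exact Subgroup.subset_closure (fun k hk => hD (S.mem_derived_of_cls hk))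
    have hn2 := hmin (n + 1) htop
    omega
end
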